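/- With R_{t,α} as above and data g, g̃ ∈ L²[0,π] with ‖g − g̃‖ ≤ δ, the regularized solutions u_α(·,t) = R_{t,α} g and ũ_α(·,t) = R_{t,α} g̃ satisfy ‖u_α(·,t) − ũ_α(·,t)‖ ≤ (C₂/C₁)((1+τ^α)/t^α) δ for all 0 < t < τ. -/

import Mathlib

open scoped RealInnerProductSpace

/-- The (real-valued) Mittag-Leffler function `E_α(x) = ∑ x^k / Γ(αk+1)`. -/
noncomputable def mittagLeffler (α x : ℝ) : ℝ :=
  ∑' k : ℕ, x ^ k / Real.Gamma (α * k + 1)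

/-- stability estimate, Theorem 5.1: with
`u = R_{t,α} g` and `ũ = R_{t,α} g̃` given by the regularization formula and `‖g − g̃‖ ≤ δ`,
one has `‖u − ũ‖ ≤ (C₂/C₁)((1+τ^α)/t^α) δ` for `0 < t < τ`. -/
theorem noisy_data_stability
    {H : Type*} [NormedAddCommGroup H] [InnerProductSpace ℝ H] [CompleteSpace H]
    (φ : HilbertBasis ℕ ℝ H)
    (α t τ C₁ C₂ δ : ℝ) (hα : 0 < α) (hα1 : α < 1)
    (ht : 0 < t) (htτ : t < τ) (hC₁ : 0 < C₁) (hC₁₂ : C₁ ≤ C₂) (hδ : 0 < δ)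
    (hbd : ∀ x : ℝ, 0 < x →
      C₁ / (Real.Gamma (1 - α) * (1 + x)) ≤ mittagLeffler α (-x) ∧
      mittagLeffler α (-x) ≤ C₂ / (Real.Gamma (1 - α) * (1 + x)))
    (g g' u u' : H) (hnoise : ‖g - g'‖ ≤ δ)
    (hu : u = ∑' n : ℕ,
      (mittagLeffler α (-((n + 1 : ℝ) ^ 2 * t ^ α)) /
        mittagLeffler α (-((n + 1 : ℝ) ^ 2 * τ ^ α)) * ⟪g, φ n⟫) • φ n)
    (hu' : u' = ∑' n : ℕ,
      (mittagLeffler α (-((n + 1 : ℝ) ^ 2 * t ^ α)) /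
        mittagLeffler α (-((n + 1 : ℝ) ^ 2 * τ ^ α)) * ⟪g', φ n⟫) • φ n) :
    ‖u - u'‖ ≤ (C₂ / C₁) * ((1 + τ ^ α) / t ^ α) * δ := by
  have hΓ : 0 < Real.Gamma (1 - α) := Real.Gamma_pos_of_pos (by linarith)
  have hta : 0 < t ^ α := Real.rpow_pos_of_pos ht α
  have hτa : 0 < τ ^ α := Real.rpow_pos_of_pos (ht.trans htτ) α
  have hC₂ : 0 < C₂ := hC₁.trans_le hC₁₂
  set M : ℝ := (C₂ / C₁) * ((1 + τ ^ α) / t ^ α) with hMdef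
  have hM : 0 ≤ M := by positivity
  set m : ℕ → ℝ := fun n => mittagLeffler α (-((n + 1 : ℝ) ^ 2 * t ^ α)) /
      mittagLeffler α (-((n + 1 : ℝ) ^ 2 * τ ^ α)) with hmdef
  -- bound on the multiplier
  have hmM : ∀ n : ℕ, |m n| ≤ M := by
    intro n
    have hk : (1 : ℝ) ≤ ((n : ℝ) + 1) ^ 2 := by nlinarith [(Nat.cast_nonneg n : (0 : ℝ) ≤ (n : ℝ))]
    have hx1 : 0 < ((n : ℝ) + 1) ^ 2 * t ^ α := by positivity
    have hx2 : 0 < ((n : ℝ) + 1) ^ 2 * τ ^ α := by positivity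
    obtain ⟨h1l, h1u⟩ := hbd _ hx1
    obtain ⟨h2l, h2u⟩ := hbd _ hx2
    have hE1 : 0 < mittagLeffler α (-(((n : ℝ) + 1) ^ 2 * t ^ α)) :=
      lt_of_lt_of_le (by positivity) h1l
    have hE2 : 0 < mittagLeffler α (-(((n : ℝ) + 1) ^ 2 * τ ^ α)) :=
      lt_of_lt_of_le (by positivity) h2l
    have hmn : m n = mittagLeffler α (-(((n : ℝ) + 1) ^ 2 * t ^ α)) /
        mittagLeffler α (-(((n : ℝ) + 1) ^ 2 * τ ^ α)) := rfl
    rw [hmn, abs_of_pos (div_pos hE1 hE2), div_le_iff₀ hE2]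
    have key : C₂ / (Real.Gamma (1 - α) * (1 + ((n : ℝ) + 1) ^ 2 * t ^ α)) ≤
        (M * C₁) / (Real.Gamma (1 - α) * (1 + ((n : ℝ) + 1) ^ 2 * τ ^ α)) := by
      rw [div_le_div_iff₀ (by positivity) (by positivity)]
      have hMC : M * C₁ = C₂ * (1 + τ ^ α) / t ^ α := by
        rw [hMdef]
        field_simp
      rw [hMC, div_mul_eq_mul_div, le_div_iff₀ hta]
      have base : (1 + ((n : ℝ) + 1) ^ 2 * τ ^ α) * t ^ α ≤
          (1 + τ ^ α) * (1 + ((n : ℝ) + 1) ^ 2 * t ^ α) := by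
        have h1 : (1 : ℝ) * t ^ α ≤ ((n : ℝ) + 1) ^ 2 * t ^ α :=
          mul_le_mul_of_nonneg_right hk hta.le
        nlinarith [hτa]
      nlinarith [mul_le_mul_of_nonneg_left base (by positivity : (0 : ℝ) ≤ C₂ * Real.Gamma (1 - α))]
    calc mittagLeffler α (-(((n : ℝ) + 1) ^ 2 * t ^ α))
        ≤ C₂ / (Real.Gamma (1 - α) * (1 + ((n : ℝ) + 1) ^ 2 * t ^ α)) := h1u
      _ ≤ (M * C₁) / (Real.Gamma (1 - α) * (1 + ((n : ℝ) + 1) ^ 2 * τ ^ α)) := key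
      _ = M * (C₁ / (Real.Gamma (1 - α) * (1 + ((n : ℝ) + 1) ^ 2 * τ ^ α))) := mul_div_assoc _ _ _
      _ ≤ M * mittagLeffler α (-(((n : ℝ) + 1) ^ 2 * τ ^ α)) :=
          mul_le_mul_of_nonneg_left h2l hM
  have h2t : (0 : ℝ) < (2 : ENNReal).toReal := by norm_num
  -- ℓ² membership of the multiplied coefficients
  have hmem : ∀ v : H, Memℓp (fun n : ℕ => m n * φ.repr v n) 2 := by
    intro v
    have hv := lp.memℓp (φ.repr v)
    rw [memℓp_gen_iff h2t] at hv ⊢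
    refine Summable.of_nonneg_of_le (fun n => Real.rpow_nonneg (norm_nonneg _) _)
      (fun n => ?_) (hv.mul_left (M ^ (2 : ENNReal).toReal))
    have h1 : ‖m n * φ.repr v n‖ ≤ M * ‖φ.repr v n‖ := by
      rw [norm_mul]
      exact mul_le_mul_of_nonneg_right (by simpa using hmM n) (norm_nonneg _)
    calc ‖m n * φ.repr v n‖ ^ (2 : ENNReal).toReal
        ≤ (M * ‖φ.repr v n‖) ^ (2 : ENNReal).toReal :=
          Real.rpow_le_rpow (norm_nonneg _) h1 h2t.le
      _ = M ^ (2 : ENNReal).toReal * ‖φ.repr v n‖ ^ (2 : ENNReal).toReal :=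
          Real.mul_rpow hM (norm_nonneg _)
  set cg : lp (fun _ : ℕ => ℝ) 2 := ⟨_, hmem g⟩ with hcg
  set cg' : lp (fun _ : ℕ => ℝ) 2 := ⟨_, hmem g'⟩ with hcg'
  have hug : u = φ.repr.symm cg := by
    rw [hu, ← (φ.hasSum_repr_symm cg).tsum_eq]
    congr 1
    funext n
    rw [show (cg : ∀ _ : ℕ, ℝ) n = m n * φ.repr g n from rfl, φ.repr_apply_apply,
      real_inner_comm]
  have hug' : u' = φ.repr.symm cg' := by
    rw [hu', ← (φ.hasSum_repr_symm cg').tsum_eq]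
    congr 1
    funext n
    rw [show (cg' : ∀ _ : ℕ, ℝ) n = m n * φ.repr g' n from rfl, φ.repr_apply_apply,
      real_inner_comm]
  have hdiff : u - u' = φ.repr.symm (cg - cg') := by
    rw [hug, hug', ← map_sub]
  set F : lp (fun _ : ℕ => ℝ) 2 := φ.repr (g - g') with hF
  have hFn : ‖F‖ = ‖g - g'‖ := φ.repr.norm_map (g - g')
  have hcoe : ∀ n : ℕ, (cg - cg') n = m n * F n := by
    intro n
    have h1 : (cg - cg') n = cg n - cg' n := lp.coeFn_sub cg cg' ▸ rfl
    have h2 : F n = φ.repr g n - φ.repr g' n := by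
      rw [hF, map_sub]
      exact lp.coeFn_sub (φ.repr g) (φ.repr g') ▸ rfl
    rw [h1, h2, show (cg : ∀ _ : ℕ, ℝ) n = m n * φ.repr g n from rfl,
      show (cg' : ∀ _ : ℕ, ℝ) n = m n * φ.repr g' n from rfl, mul_sub]
  have hnorm : ‖cg - cg'‖ ≤ M * ‖F‖ := by
    refine lp.norm_le_of_forall_sum_le h2t (by positivity) (fun s => ?_)
    have hsum : ∑ n ∈ s, ‖F n‖ ^ (2 : ENNReal).toReal ≤ ‖F‖ ^ (2 : ENNReal).toReal := by
      rw [lp.norm_rpow_eq_tsum h2t]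
      exact Summable.sum_le_tsum s (fun n _ => Real.rpow_nonneg (norm_nonneg _) _)
        ((lp.memℓp F).summable h2t)
    have hterm : ∀ n ∈ s, ‖(cg - cg') n‖ ^ (2 : ENNReal).toReal ≤
        M ^ (2 : ENNReal).toReal * ‖F n‖ ^ (2 : ENNReal).toReal := by
      intro n _
      rw [hcoe n]
      calc ‖m n * F n‖ ^ (2 : ENNReal).toReal
          ≤ (M * ‖F n‖) ^ (2 : ENNReal).toReal := by
            refine Real.rpow_le_rpow (norm_nonneg _) ?_ h2t.le
            rw [norm_mul]
            exact mul_le_mul_of_nonneg_right (by simpa using hmM n) (norm_nonneg _)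
        _ = M ^ (2 : ENNReal).toReal * ‖F n‖ ^ (2 : ENNReal).toReal :=
            Real.mul_rpow hM (norm_nonneg _)
    calc ∑ n ∈ s, ‖(cg - cg') n‖ ^ (2 : ENNReal).toReal
        ≤ ∑ n ∈ s, M ^ (2 : ENNReal).toReal * ‖F n‖ ^ (2 : ENNReal).toReal :=
          Finset.sum_le_sum hterm
      _ = M ^ (2 : ENNReal).toReal * ∑ n ∈ s, ‖F n‖ ^ (2 : ENNReal).toReal := by
          rw [Finset.mul_sum]
      _ ≤ M ^ (2 : ENNReal).toReal * ‖F‖ ^ (2 : ENNReal).toReal :=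
          mul_le_mul_of_nonneg_left hsum (Real.rpow_nonneg hM _)
      _ = (M * ‖F‖) ^ (2 : ENNReal).toReal := (Real.mul_rpow hM (norm_nonneg _)).symm
  have : ‖u - u'‖ ≤ M * ‖g - g'‖ := by
    rw [hdiff, LinearIsometryEquiv.norm_map, ← hFn]
    exact hnorm
  calc ‖u - u'‖ ≤ M * ‖g - g'‖ := this
    _ ≤ M * δ := mul_le_mul_of_nonneg_left hnoise hM
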